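/- arXiv:1006.2961 — 3 statements merged into one kernel-verified Lean document; each statement's English description precedes it below -/
import Mathlib

section
/- Let p be a prime, t the multiplicative order of an element ε ∈ (ℤ/p)^*, and n a positive integer. The multiplicity of ε as a root of the reduction of Φ_n modulo p is positive if and only if n = t·p^f for some f ≥ 0. -/
open Polynomial

/-- Let `ε ∈ (ℤ/p)ˣ` have multiplicative order `t`.  The multiplicity of `ε` as a root of
the reduction of `Φ_n` mod `p` is positive iff `n = t * p ^ f` for some `f`. -/
theorem rootMultiplicity_cyclotomic_pos_iff (p n t : ℕ) (hp : p.Prime) (hn : 0 < n)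
    (ε : (ZMod p)ˣ) (ht : orderOf ε = t) :
    0 < ((cyclotomic n ℤ).map (Int.castRingHom (ZMod p))).rootMultiplicity (ε : ZMod p) ↔
      ∃ f : ℕ, n = t * p ^ f := by
  haveI : Fact p.Prime := ⟨hp⟩
  have hordeps : orderOf (ε : ZMod p) = t := by rw [orderOf_units, ht]
  have ht0 : 0 < t := ht ▸ orderOf_pos ε
  have hpt : ¬ p ∣ t := by
    intro h
    have hdvd : t ∣ p - 1 := by
      have := orderOf_dvd_card (x := ε)
      rwa [ZMod.card_units_eq_totient, Nat.totient_prime hp, ht] at this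
    have : p ∣ p - 1 := h.trans hdvd
    have h2 := hp.two_le
    have h1 : 0 < p - 1 := by omega
    have := Nat.le_of_dvd h1 this
    omega
  rw [map_cyclotomic, rootMultiplicity_pos (cyclotomic_ne_zero n (ZMod p))]
  constructor
  · intro h
    set k := n.factorization p with hk
    set m := ordCompl[p] n with hmdef
    have hm : ¬ p ∣ m := Nat.not_dvd_ordCompl hp hn.ne'
    have hn' : n = p ^ k * m := (Nat.ordProj_mul_ordCompl_eq_self n p).symm
    haveI : NeZero (m : ZMod p) :=
      ⟨fun h0 => hm ((ZMod.natCast_eq_zero_iff m p).mp h0)⟩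
    rw [hn', isRoot_cyclotomic_prime_pow_mul_iff_of_charP] at h
    have hmt : m = t := by rw [← hordeps, h.eq_orderOf]
    exact ⟨k, by rw [hn', hmt, mul_comm]⟩
  · rintro ⟨f, rfl⟩
    haveI : NeZero (t : ZMod p) :=
      ⟨fun h0 => hpt ((ZMod.natCast_eq_zero_iff t p).mp h0)⟩
    rw [mul_comm, isRoot_cyclotomic_prime_pow_mul_iff_of_charP]
    exact hordeps ▸ IsPrimitiveRoot.orderOf (ε : ZMod p)
end

section
/- Let p be a prime, ε ∈ (ℤ/p)^* of multiplicative order t, and n a positive integer. Then the multiplicity of ε as a root of the reduction of Φ_n modulo p is at most φ(n)/φ(t). -/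
open Polynomial

lemma rootMultiplicity_pow' {R : Type*} [CommRing R] [IsDomain R] {f : R[X]} (hf : f ≠ 0)
    (e : ℕ) (x : R) : (f ^ e).rootMultiplicity x = e * f.rootMultiplicity x := by
  induction e with
  | zero => simp
  | succ k ih =>
    rw [pow_succ, Polynomial.rootMultiplicity_mul (mul_ne_zero (pow_ne_zero _ hf) hf), ih]
    ring

lemma cyclotomic_separable_zmod (p m : ℕ) [Fact p.Prime] (hm : 0 < m) (hpm : ¬ p ∣ m) :
    (cyclotomic m (ZMod p)).Separable := by
  have : (m : ZMod p) ≠ 0 := by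
    rwa [Ne, ZMod.natCast_eq_zero_iff]
  exact ((Polynomial.X_pow_sub_one_separable_iff.mpr this).of_dvd
    (cyclotomic.dvd_X_pow_sub_one m (ZMod p)))

lemma root_cyclotomic_order (p m : ℕ) [Fact p.Prime] (hm : 0 < m) (hpm : ¬ p ∣ m)
    (ε : (ZMod p)ˣ) (h : (cyclotomic m (ZMod p)).IsRoot (ε : ZMod p)) :
    orderOf ε = m := by
  haveI : NeZero ((m : ℕ) : ZMod p) :=
    ⟨by rwa [Ne, ZMod.natCast_eq_zero_iff]⟩
  rw [Polynomial.isRoot_cyclotomic_iff] at h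
  rw [← orderOf_units, ← h.eq_orderOf]

/-- Let `ε ∈ (ZMod p)ˣ` have multiplicative order `t`.  The multiplicity of `ε` as a root of
the reduction of `Φ_n` mod `p` is at most `φ(n) / φ(t)`. -/
theorem rootMultiplicity_cyclotomic_le (p n t : ℕ) (hp : p.Prime) (hn : 0 < n)
    (ε : (ZMod p)ˣ) (ht : orderOf ε = t) :
    ((cyclotomic n ℤ).map (Int.castRingHom (ZMod p))).rootMultiplicity (ε : ZMod p) ≤
      Nat.totient n / Nat.totient t := by
  haveI : Fact p.Prime := ⟨hp⟩
  rw [map_cyclotomic_int]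
  set k := n.factorization p with hk
  set m := n / p ^ k with hm
  have hsplit : p ^ k * m = n := Nat.ordProj_mul_ordCompl_eq_self n p
  have hmpos : 0 < m := Nat.ordCompl_pos p hn.ne'
  have hpm : ¬ p ∣ m := Nat.not_dvd_ordCompl hp hn.ne'
  have hcne : cyclotomic m (ZMod p) ≠ 0 := cyclotomic_ne_zero m (ZMod p)
  by_cases hroot : (cyclotomic m (ZMod p)).IsRoot (ε : ZMod p)
  · have hord : t = m := by rw [← ht, root_cyclotomic_order p m hmpos hpm ε hroot]
    have hle1 : (cyclotomic m (ZMod p)).rootMultiplicity (ε : ZMod p) ≤ 1 :=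
      rootMultiplicity_le_one_of_separable (cyclotomic_separable_zmod p m hmpos hpm) _
    have htot : n.totient = (p ^ k).totient * m.totient := by
      rw [← hsplit, Nat.totient_mul (Nat.Coprime.pow_left _
        (hp.coprime_iff_not_dvd.mpr hpm))]
    have hdiv : n.totient / t.totient = (p ^ k).totient := by
      rw [hord, htot, Nat.mul_div_cancel _ (Nat.totient_pos.mpr hmpos)]
    rw [hdiv, ← hsplit]
    rcases Nat.eq_zero_or_pos k with hk0 | hkpos
    · simpa [hk0] using hle1
    · rw [cyclotomic_mul_prime_pow_eq (ZMod p) hpm hkpos,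
        rootMultiplicity_pow' hcne, Nat.totient_prime_pow hp hkpos]
      have hpk : p ^ (k - 1) * (p - 1) = p ^ k - p ^ (k - 1) := by
        rw [Nat.mul_sub, mul_one, ← pow_succ, Nat.sub_add_cancel hkpos]
      calc (p ^ k - p ^ (k - 1)) * (cyclotomic m (ZMod p)).rootMultiplicity (ε : ZMod p)
          ≤ (p ^ k - p ^ (k - 1)) * 1 := Nat.mul_le_mul_left _ hle1
        _ = p ^ (k - 1) * (p - 1) := by rw [mul_one, hpk]
  · rw [← hsplit]
    rcases Nat.eq_zero_or_pos k with hk0 | hkpos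
    · rw [hk0, pow_zero, one_mul]
      rw [rootMultiplicity_eq_zero hroot]
      exact Nat.zero_le _
    · rw [cyclotomic_mul_prime_pow_eq (ZMod p) hpm hkpos,
        rootMultiplicity_pow' hcne, rootMultiplicity_eq_zero hroot, mul_zero]
      exact Nat.zero_le _
end

section
/- Let p be a prime, ε ∈ (ℤ/p)^* of multiplicative order t, and F = ∏_i Φ_{d_i} a product of cyclotomic polynomials of total degree d = ∑_i φ(d_i). Then the multiplicity of ε as a root of the reduction of F modulo p is at most d/φ(t). -/
open Polynomial

private lemma rootMult_pow {R : Type*} [CommRing R] [IsDomain R] (f : R[X]) (hf : f ≠ 0)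
    (x : R) (n : ℕ) : (f ^ n).rootMultiplicity x = n * f.rootMultiplicity x := by
  induction n with
  | zero => simp [rootMultiplicity_eq_zero (show ¬IsRoot (1 : R[X]) x by simp [IsRoot])]
  | succ n ih =>
    rw [pow_succ, rootMultiplicity_mul (mul_ne_zero (pow_ne_zero _ hf) hf), ih]
    ring

private lemma rootMult_prod {R : Type*} [CommRing R] [IsDomain R] {ι : Type*} (s : Finset ι)
    (f : ι → R[X]) (hf : ∀ i ∈ s, f i ≠ 0) (x : R) :
    (∏ i ∈ s, f i).rootMultiplicity x = ∑ i ∈ s, (f i).rootMultiplicity x := by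
  classical
  induction s using Finset.induction with
  | empty => simp [rootMultiplicity_eq_zero (show ¬IsRoot (1 : R[X]) x by simp [IsRoot])]
  | @insert a s ha ih =>
    rw [Finset.prod_insert ha, Finset.sum_insert ha,
      rootMultiplicity_mul (mul_ne_zero (hf a (Finset.mem_insert_self a s))
        (Finset.prod_ne_zero_iff.mpr fun i hi => hf i (Finset.mem_insert_of_mem hi))),
      ih fun i hi => hf i (Finset.mem_insert_of_mem hi)]

/-- Coprime case: multiplicity of `ε` in `Φ_m` over `ZMod p` when `p ∤ m`. -/
private lemma aux_coprime (p : ℕ) [hp : Fact p.Prime] (ε : (ZMod p)ˣ) (m : ℕ) (hm : 0 < m)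
    (hpm : ¬ p ∣ m) :
    (cyclotomic m (ZMod p)).rootMultiplicity (ε : ZMod p) * (orderOf ε).totient ≤
      m.totient := by
  have hne : NeZero ((m : ZMod p)) := ⟨by
    rw [Ne, ZMod.natCast_eq_zero_iff]
    exact hpm⟩
  by_cases hroot : IsRoot (cyclotomic m (ZMod p)) (ε : ZMod p)
  · -- ε is a primitive m-th root, so m = orderOf ε
    have hprim : IsPrimitiveRoot (ε : ZMod p) m := (isRoot_cyclotomic_iff).mp hroot
    have hms : m = orderOf ε := by rw [hprim.eq_orderOf, orderOf_units]
    -- separable, so multiplicity ≤ 1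
    have hsep : (cyclotomic m (ZMod p)).Separable := by
      refine Separable.of_dvd ?_ (cyclotomic.dvd_X_pow_sub_one m (ZMod p))
      exact X_pow_sub_one_separable_iff.mpr hne.out
    have h1 := rootMultiplicity_le_one_of_separable hsep (ε : ZMod p)
    calc (cyclotomic m (ZMod p)).rootMultiplicity (ε : ZMod p) * (orderOf ε).totient
        ≤ 1 * (orderOf ε).totient := Nat.mul_le_mul_right _ h1
      _ = m.totient := by rw [one_mul, hms]
  · rw [rootMultiplicity_eq_zero hroot, zero_mul]
    exact Nat.zero_le _

private lemma aux_main (p : ℕ) [hp : Fact p.Prime] (ε : (ZMod p)ˣ) (m : ℕ) (hm : 0 < m) :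
    (cyclotomic m (ZMod p)).rootMultiplicity (ε : ZMod p) * (orderOf ε).totient ≤
      m.totient := by
  set k := m.factorization p with hk
  set m' := m / p ^ k with hm'
  have hmeq : m = p ^ k * m' := (Nat.ordProj_mul_ordCompl_eq_self m p).symm
  have hpm' : ¬ p ∣ m' := Nat.not_dvd_ordCompl hp.out hm.ne'
  have hm'pos : 0 < m' := Nat.ordCompl_pos p hm.ne'
  rcases Nat.eq_zero_or_pos k with hk0 | hkpos
  · rw [hk0, pow_zero, one_mul] at hmeq
    rw [hmeq]
    exact aux_coprime p ε m' hm'pos hpm'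
  · have hcyc : cyclotomic m (ZMod p) = cyclotomic m' (ZMod p) ^ (p ^ k - p ^ (k - 1)) := by
      rw [hmeq]; exact cyclotomic_mul_prime_pow_eq (ZMod p) hpm' hkpos
    have hne : cyclotomic m' (ZMod p) ≠ 0 := cyclotomic_ne_zero m' (ZMod p)
    have hcop : (p ^ k).Coprime m' :=
      Nat.Coprime.pow_left _ (hp.out.coprime_iff_not_dvd.mpr hpm')
    rw [hcyc, rootMult_pow _ hne,
      show m.totient = ((p ^ k) * m').totient by rw [← hmeq],
      Nat.totient_mul hcop, Nat.totient_prime_pow hp.out hkpos]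
    have hle := aux_coprime p ε m' hm'pos hpm'
    calc (p ^ k - p ^ (k - 1)) * (cyclotomic m' (ZMod p)).rootMultiplicity (ε : ZMod p)
          * (orderOf ε).totient
        = (p ^ k - p ^ (k - 1)) * ((cyclotomic m' (ZMod p)).rootMultiplicity (ε : ZMod p)
          * (orderOf ε).totient) := by ring
      _ ≤ (p ^ k - p ^ (k - 1)) * m'.totient := Nat.mul_le_mul_left _ hle
      _ = p ^ (k - 1) * (p - 1) * m'.totient := by
          congr 1
          obtain ⟨j, hj⟩ : ∃ j, k = j + 1 := ⟨k - 1, (Nat.succ_pred_eq_of_pos hkpos).symm⟩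
          rw [hj]
          simp only [Nat.add_sub_cancel, pow_succ]
          rw [Nat.mul_sub, mul_one]

/-- Let `ε ∈ (ZMod p)ˣ` have order `t` and `F = ∏ i, Φ_{d i}` a product of cyclotomic
polynomials of total degree `d = ∑ i, φ (d i)`.  The multiplicity of `ε` as a root of the
reduction of `F` mod `p` is at most `d / φ(t)`. -/
theorem rootMultiplicity_prod_cyclotomic_le (p t : ℕ) (hp : p.Prime)
    (ε : (ZMod p)ˣ) (ht : orderOf ε = t)
    {ι : Type*} (s : Finset ι) (dd : ι → ℕ) (hdd : ∀ i ∈ s, 0 < dd i)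
    (F : Polynomial ℤ) (hF : F = ∏ i ∈ s, cyclotomic (dd i) ℤ)
    (d : ℕ) (hd : d = ∑ i ∈ s, Nat.totient (dd i)) :
    (F.map (Int.castRingHom (ZMod p))).rootMultiplicity (ε : ZMod p) ≤ d / Nat.totient t := by
  haveI : Fact p.Prime := ⟨hp⟩
  have hmap : F.map (Int.castRingHom (ZMod p)) = ∏ i ∈ s, cyclotomic (dd i) (ZMod p) := by
    rw [hF, Polynomial.map_prod]
    exact Finset.prod_congr rfl fun i _ => map_cyclotomic_int (dd i) (ZMod p)
  rw [hmap, rootMult_prod s _ (fun i _ => cyclotomic_ne_zero (dd i) (ZMod p))]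
  have htpos : 0 < t.totient := Nat.totient_pos.mpr (ht ▸ orderOf_pos ε)
  rw [Nat.le_div_iff_mul_le htpos, Finset.sum_mul, hd]
  exact Finset.sum_le_sum fun i hi => ht ▸ aux_main p ε (dd i) (hdd i hi)
end
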